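/- arXiv:1611.09583 — 7 statements merged into one kernel-verified Lean document; each statement's English description precedes it below -/
import Mathlib

section
/- Let ν₁, ν₂ be complex numbers of modulus 1 and λ ∈ [-1,1] a real number. Then both roots μ of the quadratic equation μ² − (ν₁ − ν₂)λμ − ν₁ν₂ = 0 have modulus 1. -/
/-- Let `ν₁, ν₂` be complex numbers of modulus 1 and `λ ∈ [-1,1]` real. Then every root `μ`
of `μ² − (ν₁ − ν₂)λμ − ν₁ν₂ = 0` has modulus 1. -/
theorem stmt_4 (ν₁ ν₂ : ℂ) (hν₁ : ‖ν₁‖ = 1) (hν₂ : ‖ν₂‖ = 1)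
    (lam : ℝ) (hlam : lam ∈ Set.Icc (-1 : ℝ) 1)
    (μ : ℂ) (hμ : μ ^ 2 - (ν₁ - ν₂) * (lam : ℂ) * μ - ν₁ * ν₂ = 0) :
    ‖μ‖ = 1 := by
  obtain ⟨hlam1, hlam2⟩ := hlam
  -- pick a square root β of ν₁ν₂
  obtain ⟨β, hβ⟩ : ∃ β : ℂ, β ^ 2 = ν₁ * ν₂ :=
    IsAlgClosed.exists_pow_nat_eq (ν₁ * ν₂) Nat.zero_lt_two
  have hβabs : ‖β‖ = 1 := by
    have h := congrArg (‖·‖) hβ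
    rw [norm_pow, norm_mul, hν₁, hν₂] at h
    nlinarith [norm_nonneg β]
  have hβ0 : β ≠ 0 := by
    intro h; rw [h] at hβabs; simp at hβabs
  -- conjugation facts
  have hm1 : ν₁ * (starRingEnd ℂ) ν₁ = 1 := by
    rw [Complex.mul_conj, Complex.normSq_eq_norm_sq, hν₁]; norm_num
  have hm2 : ν₂ * (starRingEnd ℂ) ν₂ = 1 := by
    rw [Complex.mul_conj, Complex.normSq_eq_norm_sq, hν₂]; norm_num
  have hmβ : β * (starRingEnd ℂ) β = 1 := by
    rw [Complex.mul_conj, Complex.normSq_eq_norm_sq, hβabs]; norm_num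
  have hc1 : (starRingEnd ℂ) ν₁ = ν₁⁻¹ := (inv_eq_of_mul_eq_one_right hm1).symm
  have hc2 : (starRingEnd ℂ) ν₂ = ν₂⁻¹ := (inv_eq_of_mul_eq_one_right hm2).symm
  have hcβ : (starRingEnd ℂ) β = β⁻¹ := (inv_eq_of_mul_eq_one_right hmβ).symm
  have hν₁0 : ν₁ ≠ 0 := by intro h; rw [h] at hν₁; simp at hν₁
  have hν₂0 : ν₂ ≠ 0 := by intro h; rw [h] at hν₂; simp at hν₂
  obtain ⟨w, hw⟩ : ∃ w : ℂ, w = (ν₁ - ν₂) / β := ⟨_, rfl⟩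
  -- w is purely imaginary
  have hwconj : (starRingEnd ℂ) w = -w := by
    rw [hw, map_div₀, map_sub, hc1, hc2, hcβ]
    field_simp
    linear_combination (ν₂ - ν₁) * hβ
  have hwre : w.re = 0 := by
    have h1 := congrArg Complex.re hwconj
    simp at h1
    linarith
  -- bound on w.im
  have hwabs : ‖w‖ ≤ 2 := by
    rw [hw, norm_div, hβabs, div_one]
    calc ‖ν₁ - ν₂‖ ≤ ‖ν₁‖ + ‖ν₂‖ := norm_sub_le _ _
    _ = 2 := by rw [hν₁, hν₂]; norm_num
  have hwim : w.im ^ 2 ≤ 4 := by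
    have h1 : w.im ^ 2 ≤ ‖w‖ ^ 2 := by
      rw [Complex.sq_norm, Complex.normSq_apply]
      nlinarith [sq_nonneg w.re]
    nlinarith [norm_nonneg w]
  obtain ⟨s, hs⟩ : ∃ s : ℝ, s = lam * w.im := ⟨_, rfl⟩
  have hs4 : s ^ 2 ≤ 4 := by
    rw [hs]
    nlinarith [sq_nonneg w.im, sq_nonneg lam]
  obtain ⟨z, hzdef⟩ : ∃ z : ℂ, z = μ / β := ⟨_, rfl⟩
  have hμz : μ = z * β := by rw [hzdef]; field_simp
  -- w = w.im * I
  have hwI : w = (w.im : ℂ) * Complex.I := by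
    apply Complex.ext <;> simp [hwre]
  have hν₁ν₂ : ν₁ - ν₂ = w * β := by
    rw [hw]; field_simp
  -- the transformed equation
  have hz : z ^ 2 - (s : ℂ) * Complex.I * z - 1 = 0 := by
    have h2 : (z * β) ^ 2 - (w * β) * (lam : ℂ) * (z * β) - β ^ 2 = 0 := by
      rw [← hμz, ← hν₁ν₂, hβ]; exact hμ
    have hβ2 : β ^ 2 ≠ 0 := pow_ne_zero 2 hβ0
    have h3 : (z ^ 2 - w * (lam : ℂ) * z - 1) * β ^ 2 = 0 := by
      linear_combination h2
    have h4 : z ^ 2 - w * (lam : ℂ) * z - 1 = 0 :=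
      (mul_eq_zero.mp h3).resolve_right hβ2
    rw [hwI] at h4
    rw [hs]
    push_cast
    linear_combination h4
  -- complete the square: c := z - s*I/2
  obtain ⟨c, hcdef⟩ : ∃ c : ℂ, c = z - (s : ℂ) * Complex.I / 2 := ⟨_, rfl⟩
  have hc2' : c ^ 2 = ((1 - s ^ 2 / 4 : ℝ) : ℂ) := by
    rw [hcdef]
    push_cast
    linear_combination hz + ((s : ℂ) ^ 2 / 4) * Complex.I_sq
  have hcre : (c ^ 2).re = 1 - s ^ 2 / 4 := by rw [hc2', Complex.ofReal_re]
  have hcim : (c ^ 2).im = 0 := by rw [hc2', Complex.ofReal_im]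
  have hsqre : (c ^ 2).re = c.re ^ 2 - c.im ^ 2 := by
    rw [pow_two, Complex.mul_re]; ring
  have hsqim : (c ^ 2).im = 2 * (c.re * c.im) := by
    rw [pow_two, Complex.mul_im]; ring
  have hre : c.re ^ 2 - c.im ^ 2 = 1 - s ^ 2 / 4 := by rw [← hsqre, hcre]
  have him : 2 * (c.re * c.im) = 0 := by rw [← hsqim, hcim]
  -- c is real
  have h0 : c.re * c.im = 0 := by linarith
  have h3' : c.re ^ 2 * c.im ^ 2 = 0 := by
    calc c.re ^ 2 * c.im ^ 2 = (c.re * c.im) ^ 2 := by ring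
    _ = 0 := by rw [h0]; ring
  have h4 : c.im ^ 4 = (s ^ 2 / 4 - 1) * c.im ^ 2 := by
    have h2 : c.im ^ 2 * (c.re ^ 2 - c.im ^ 2) = (1 - s ^ 2 / 4) * c.im ^ 2 := by
      linear_combination c.im ^ 2 * hre
    linear_combination h3' - h2
  have h5 : c.im ^ 4 ≤ 0 := by nlinarith [sq_nonneg c.im]
  have h6 : c.im ^ 4 = 0 := le_antisymm h5 (by positivity)
  have hcimz : c.im = 0 := by
    exact pow_eq_zero_iff (by norm_num) |>.mp h6
  -- compute |z|
  have hzc : z = c + (s : ℂ) * Complex.I / 2 := by rw [hcdef]; ring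
  have hzre : z.re = c.re := by
    rw [hzc]; simp
  have hzim : z.im = s / 2 := by
    rw [hzc]; simp [hcimz]
  have hcre2 : c.re ^ 2 = 1 - s ^ 2 / 4 := by
    rw [← hre, hcimz]; ring
  have hznorm : Complex.normSq z = 1 := by
    rw [Complex.normSq_apply, hzre, hzim]
    linear_combination hcre2
  have hzabs : ‖z‖ = 1 := by
    rw [Complex.norm_def, hznorm, Real.sqrt_one]
  rw [hμz, norm_mul, hzabs, hβabs, mul_one]
end

section
/- Let S be a unitary involution (S² = I) and C a unitary operator on a finite-dimensional Hilbert space. Suppose a is a unit vector with C a = ν₁ a, and set b = S a. If furthermore C b = (ν₁ − ν₂)⟨a,b⟩ a + ν₂ b with λ := ⟨a,b⟩ real, then U := S C satisfies U a = ν₁ b and U b = ν₂ a + (ν₁ − ν₂) λ b; in particular the span of {a, b} is U-invariant. -/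
/-- Invariant-subspace computation: `S` unitary involution, `C` unitary, `a` a unit vector with
`Ca = ν₁ a`, `b = Sa`, `Cb = (ν₁−ν₂)⟨a,b⟩ a + ν₂ b` with `λ = ⟨a,b⟩` real. Then `U = SC`
satisfies `Ua = ν₁ b`, `Ub = ν₂ a + (ν₁−ν₂)λ b`, and `span{a,b}` is `U`-invariant. -/
theorem stmt_6 (N : ℕ) (S C : Matrix (Fin N) (Fin N) ℂ)
    (hS : S ∈ Matrix.unitaryGroup (Fin N) ℂ) (hS2 : S * S = 1)
    (hC : C ∈ Matrix.unitaryGroup (Fin N) ℂ)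
    (ν₁ ν₂ : ℂ) (hν₁ : ‖ν₁‖ = 1) (hν₂ : ‖ν₂‖ = 1)
    (a b : Fin N → ℂ) (ha : dotProduct (star a) a = 1)
    (hCa : C.mulVec a = ν₁ • a) (hb : b = S.mulVec a)
    (lam : ℝ) (hlam : (lam : ℂ) = dotProduct (star a) b)
    (hCb : C.mulVec b = ((ν₁ - ν₂) * (lam : ℂ)) • a + ν₂ • b) :
    (S * C).mulVec a = ν₁ • b ∧
    (S * C).mulVec b = ν₂ • a + ((ν₁ - ν₂) * (lam : ℂ)) • b ∧
    ∀ v ∈ Submodule.span ℂ ({a, b} : Set (Fin N → ℂ)),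
      (S * C).mulVec v ∈ Submodule.span ℂ ({a, b} : Set (Fin N → ℂ)) := by
  have hSb : S.mulVec b = a := by
    rw [hb, Matrix.mulVec_mulVec, hS2, Matrix.one_mulVec]
  have h1 : (S * C).mulVec a = ν₁ • b := by
    rw [← Matrix.mulVec_mulVec, hCa, Matrix.mulVec_smul, ← hb]
  have h2 : (S * C).mulVec b = ν₂ • a + ((ν₁ - ν₂) * (lam : ℂ)) • b := by
    rw [← Matrix.mulVec_mulVec, hCb, Matrix.mulVec_add, Matrix.mulVec_smul,
      Matrix.mulVec_smul, hSb, ← hb]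
    abel
  refine ⟨h1, h2, ?_⟩
  intro v hv
  induction hv using Submodule.span_induction with
  | mem x hx =>
    rcases hx with rfl | rfl
    · rw [h1]
      exact Submodule.smul_mem _ _ (Submodule.subset_span (by simp))
    · rw [h2]
      exact Submodule.add_mem _
        (Submodule.smul_mem _ _ (Submodule.subset_span (by simp)))
        (Submodule.smul_mem _ _ (Submodule.subset_span (by simp)))
  | zero => simp [Matrix.mulVec_zero]
  | add x y _ _ hx hy =>
    rw [Matrix.mulVec_add]; exact Submodule.add_mem _ hx hy
  | smul c x _ hx =>
    rw [Matrix.mulVec_smul]; exact Submodule.smul_mem _ _ hx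
end

section
/- Let S be a unitary involution, C unitary, a a unit vector with Ca = ν₁a, b = Sa, λ = ⟨a,b⟩ real with λ ≠ ±1, and Cb = (ν₁−ν₂)λa + ν₂b. Then for each root μ of μ² − (ν₁−ν₂)λμ − ν₁ν₂ = 0, the vector u = ν₂a + μb is a nonzero eigenvector of U = SC with eigenvalue μ. -/
/-- If `λ = ⟨a,b⟩` is real with `λ ≠ ±1`, then for each root `μ` of
`μ² − (ν₁−ν₂)λμ − ν₁ν₂ = 0`, the vector `u = ν₂ a + μ b` is a nonzero eigenvector of
`U = SC` with eigenvalue `μ`. -/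
theorem stmt_8 (N : ℕ) (S C : Matrix (Fin N) (Fin N) ℂ)
    (hS : S ∈ Matrix.unitaryGroup (Fin N) ℂ) (hS2 : S * S = 1)
    (hC : C ∈ Matrix.unitaryGroup (Fin N) ℂ)
    (ν₁ ν₂ : ℂ) (hν₁ : ‖ν₁‖ = 1) (hν₂ : ‖ν₂‖ = 1)
    (a b : Fin N → ℂ) (ha : dotProduct (star a) a = 1)
    (hCa : C.mulVec a = ν₁ • a) (hb : b = S.mulVec a)
    (lam : ℝ) (hlam : (lam : ℂ) = dotProduct (star a) b)
    (hlam1 : lam ≠ 1) (hlam2 : lam ≠ -1)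
    (hCb : C.mulVec b = ((ν₁ - ν₂) * (lam : ℂ)) • a + ν₂ • b)
    (μ : ℂ) (hμ : μ ^ 2 - (ν₁ - ν₂) * (lam : ℂ) * μ - ν₁ * ν₂ = 0) :
    ν₂ • a + μ • b ≠ 0 ∧ (S * C).mulVec (ν₂ • a + μ • b) = μ • (ν₂ • a + μ • b) := by
  have hSH : S.conjTranspose * S = 1 := hS.1
  have hSb : S.mulVec b = a := by
    rw [hb, Matrix.mulVec_mulVec, hS2, Matrix.one_mulVec]
  have hba : dotProduct (star b) a = (lam : ℂ) := by
    rw [Matrix.star_dotProduct, ← hlam]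
    simp [Complex.star_def, Complex.conj_ofReal]
  have hbb : dotProduct (star b) b = 1 := by
    rw [hb, Matrix.star_mulVec, Matrix.dotProduct_mulVec, Matrix.vecMul_vecMul, hSH,
      Matrix.vecMul_one, ha]
  constructor
  · intro h
    have e1 : ν₂ + μ * (lam : ℂ) = 0 := by
      have := congrArg (dotProduct (star a)) h
      simpa [dotProduct_add, dotProduct_smul, ha, ← hlam, smul_eq_mul] using this
    have e2 : ν₂ * (lam : ℂ) + μ = 0 := by
      have := congrArg (dotProduct (star b)) h
      simpa [dotProduct_add, dotProduct_smul, hba, hbb, smul_eq_mul] using this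
    have hl1 : ((lam : ℂ)) ≠ 1 := by exact_mod_cast fun h => hlam1 (by exact_mod_cast h)
    have hl2 : ((lam : ℂ)) ≠ -1 := by
      intro h; apply hlam2; exact_mod_cast h
    have hm1 : ν₂ - μ = 0 := by
      have : (ν₂ - μ) * (1 - (lam : ℂ)) = 0 := by linear_combination e1 - e2
      rcases mul_eq_zero.mp this with h' | h'
      · exact h'
      · exact absurd (by linear_combination -h') hl1
    have hm2 : ν₂ + μ = 0 := by
      have : (ν₂ + μ) * (1 + (lam : ℂ)) = 0 := by linear_combination e1 + e2
      rcases mul_eq_zero.mp this with h' | h'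
      · exact h'
      · exact absurd (by linear_combination h') hl2
    have : ν₂ = 0 := by linear_combination (hm1 + hm2) / 2
    rw [this] at hν₂; simp at hν₂
  · rw [← Matrix.mulVec_mulVec]
    simp only [Matrix.mulVec_add, Matrix.mulVec_smul, hCa, hCb, hSb, ← hb]
    match_scalars
    · linear_combination -hμ
    · ring
end

section
/- Let n ≥ 2 and let J be the n×n matrix with entries J_{i,i+1 mod n} = conj(r_i)·l_{i+1 mod n} and J_{i+1 mod n,i} = conj over the previous entry (i.e. J is Hermitian), all other entries 0, where for each i, (l_i, r_i) ∈ ℂ² is a unit vector (|l_i|² + |r_i|² = 1). Then every eigenvalue of J is real and lies in the interval [−1, 1]. -/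
/-- Let `n ≥ 2` and `J` the Hermitian cyclic-tridiagonal matrix with
`J_{i,i+1} = conj(r_i)·l_{i+1}` (indices mod `n`) and all other entries (off the cyclic
super/sub-diagonal) zero, where each `(l_i, r_i)` is a unit vector in `ℂ²`. Then every
eigenvalue of `J` is real and lies in `[−1, 1]`. -/
theorem stmt_10 (n : ℕ) [NeZero n] (hn : 2 ≤ n)
    (l r : ZMod n → ℂ)
    (hunit : ∀ i, ‖l i‖ ^ 2 + ‖r i‖ ^ 2 = 1)
    (J : Matrix (ZMod n) (ZMod n) ℂ)
    (hherm : J.IsHermitian)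
    (hsuper : ∀ i j : ZMod n, j = i + 1 → J i j = (starRingEnd ℂ) (r i) * l j)
    (hzero : ∀ i j : ZMod n, j ≠ i + 1 → i ≠ j + 1 → J i j = 0)
    (μ : ℂ) (hμ : μ ∈ spectrum ℂ J) :
    μ.im = 0 ∧ -1 ≤ μ.re ∧ μ.re ≤ 1 := by
  classical
  have hherm' : ∀ i j, (starRingEnd ℂ) (J i j) = J j i := by
    intro i j
    have := congrFun (congrFun hherm.symm j) i
    simpa [Matrix.conjTranspose_apply] using this.symm
  -- extract an eigenvector
  have hnotunit : ¬ IsUnit ((algebraMap ℂ (Matrix (ZMod n) (ZMod n) ℂ)) μ - J) :=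
    spectrum.mem_iff.mp hμ
  have hdet : ((algebraMap ℂ (Matrix (ZMod n) (ZMod n) ℂ)) μ - J).det = 0 := by
    by_contra h
    exact hnotunit ((Matrix.isUnit_iff_isUnit_det _).mpr (isUnit_iff_ne_zero.mpr h))
  obtain ⟨v, hv0, hv⟩ := (Matrix.exists_mulVec_eq_zero_iff).mpr hdet
  have heig : ∀ i, Matrix.mulVec J v i = μ * v i := by
    intro i
    have h := congrFun hv i
    rw [Matrix.sub_mulVec] at h
    have h1 : Matrix.mulVec ((algebraMap ℂ (Matrix (ZMod n) (ZMod n) ℂ)) μ) v i = μ * v i := by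
      simp [Matrix.mulVec, dotProduct, Matrix.algebraMap_matrix_apply,
        Finset.sum_ite_eq, mul_comm]
    have h2 : Matrix.mulVec ((algebraMap ℂ (Matrix (ZMod n) (ZMod n) ℂ)) μ) v i
        - Matrix.mulVec J v i = 0 := h
    rw [h1] at h2
    linear_combination -h2
  set N : ℝ := ∑ i, ‖v i‖ ^ 2 with hNdef
  have hNpos : 0 < N := by
    obtain ⟨i, hi⟩ := Function.ne_iff.mp hv0
    refine Finset.sum_pos' (fun j _ => by positivity) ⟨i, Finset.mem_univ i, ?_⟩
    exact pow_pos (norm_pos_iff.mpr hi) 2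
  have hS : ∑ i, (starRingEnd ℂ) (v i) * Matrix.mulVec J v i = μ * (N : ℝ) := by
    calc ∑ i, (starRingEnd ℂ) (v i) * Matrix.mulVec J v i
        = ∑ i, μ * ((‖v i‖ ^ 2 : ℝ) : ℂ) := by
          refine Finset.sum_congr rfl fun i _ => ?_
          rw [heig i]
          rw [show ((‖v i‖ ^ 2 : ℝ) : ℂ) = (starRingEnd ℂ) (v i) * v i by
            rw [Complex.sq_norm]
            exact Complex.normSq_eq_conj_mul_self]
          ring
      _ = μ * (N : ℝ) := by rw [← Finset.mul_sum, hNdef]; push_cast; ring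
  have hSd : (∑ i, (starRingEnd ℂ) (v i) * Matrix.mulVec J v i)
      = ∑ i, ∑ j, (starRingEnd ℂ) (v i) * J i j * v j := by
    simp [Matrix.mulVec, dotProduct, Finset.mul_sum, mul_assoc]
  -- realness of μ
  have hconjS : (starRingEnd ℂ) (μ * (N : ℝ)) = μ * (N : ℝ) := by
    rw [← hS, hSd]
    calc (starRingEnd ℂ) (∑ i, ∑ j, (starRingEnd ℂ) (v i) * J i j * v j)
        = ∑ i, ∑ j, (starRingEnd ℂ) (v j) * J j i * v i := by
          rw [map_sum]
          refine Finset.sum_congr rfl fun i _ => ?_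
          rw [map_sum]
          refine Finset.sum_congr rfl fun j _ => ?_
          rw [map_mul, map_mul, RingHomCompTriple.comp_apply, RingHom.id_apply, hherm' i j]
          ring
      _ = ∑ j, ∑ i, (starRingEnd ℂ) (v j) * J j i * v i := Finset.sum_comm
  have him : μ.im = 0 := by
    have hNne : ((N : ℝ) : ℂ) ≠ 0 := by
      exact_mod_cast ne_of_gt hNpos
    have : (starRingEnd ℂ) μ = μ := by
      rw [map_mul, Complex.conj_ofReal] at hconjS
      exact mul_right_cancel₀ hNne hconjS
    rw [Complex.conj_eq_iff_im] at this
    exact this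
  -- the norm bound
  set g : ZMod n → ℝ := fun i =>
    ‖v i‖ * (‖r i‖ * ‖l (i + 1)‖) * ‖v (i + 1)‖
    with hgdef
  have habsJ : ∀ i j : ZMod n,
      ‖v i‖ * ‖J i j‖ * ‖v j‖
        ≤ (if j = i + 1 then g i else 0) + (if i = j + 1 then g j else 0) := by
    intro i j
    by_cases h1 : j = i + 1
    · subst h1
      have hJ : ‖J i (i + 1)‖ = ‖r i‖ * ‖l (i + 1)‖ := by
        rw [hsuper i (i + 1) rfl, norm_mul, Complex.norm_conj]
      rw [hJ, if_pos rfl]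
      have hg0 : (0:ℝ) ≤ (if i = i + 1 + 1 then g (i + 1) else 0) := by
        split
        · simp only [hgdef]; positivity
        · exact le_refl 0
      simp only [hgdef] at hg0 ⊢
      linarith
    · by_cases h2 : i = j + 1
      · subst h2
        have hJ : ‖J (j + 1) j‖ = ‖r j‖ * ‖l (j + 1)‖ := by
          rw [← hherm' j (j + 1), Complex.norm_conj, hsuper j (j + 1) rfl, norm_mul,
            Complex.norm_conj]
        rw [hJ, if_neg h1, if_pos rfl]
        simp only [hgdef, zero_add]
        exact le_of_eq (by ring)
      · rw [hzero i j h1 h2, if_neg h1, if_neg h2]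
        simp
  have hbound : ‖μ * (N : ℝ)‖ ≤ N := by
    rw [← hS, hSd]
    have step1 : ‖∑ i, ∑ j, (starRingEnd ℂ) (v i) * J i j * v j‖
        ≤ ∑ i, ∑ j, ‖v i‖ * ‖J i j‖ * ‖v j‖ := by
      refine (norm_sum_le _ _).trans (Finset.sum_le_sum fun i _ => ?_)
      refine (norm_sum_le _ _).trans (Finset.sum_le_sum fun j _ => ?_)
      rw [norm_mul, norm_mul, Complex.norm_conj]
    have step2 : ∑ i, ∑ j, ‖v i‖ * ‖J i j‖ * ‖v j‖
        ≤ ∑ i : ZMod n, 2 * g i := by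
      calc ∑ i, ∑ j, ‖v i‖ * ‖J i j‖ * ‖v j‖
          ≤ ∑ i, ∑ j, ((if j = i + 1 then g i else 0) + (if i = j + 1 then g j else 0)) :=
            Finset.sum_le_sum fun i _ => Finset.sum_le_sum fun j _ => habsJ i j
        _ = (∑ i, ∑ j : ZMod n, (if j = i + 1 then g i else 0))
            + ∑ i, ∑ j : ZMod n, (if i = j + 1 then g j else 0) := by
            rw [← Finset.sum_add_distrib]
            exact Finset.sum_congr rfl fun i _ => Finset.sum_add_distrib
        _ = (∑ i : ZMod n, g i) + ∑ i : ZMod n, g i := by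
            congr 1
            · exact Finset.sum_congr rfl fun i _ => by simp
            · rw [Finset.sum_comm]
              exact Finset.sum_congr rfl fun j _ => by simp
        _ = ∑ i : ZMod n, 2 * g i := by
            rw [← Finset.sum_add_distrib]
            exact Finset.sum_congr rfl fun i _ => by ring
    have step3 : ∑ i : ZMod n, 2 * g i ≤ N := by
      have h1 : ∀ i : ZMod n, 2 * g i ≤
          ‖r i‖ ^ 2 * ‖v i‖ ^ 2
            + ‖l (i + 1)‖ ^ 2 * ‖v (i + 1)‖ ^ 2 := by
        intro i
        have hg : g i = ‖v i‖ * (‖r i‖ * ‖l (i + 1)‖)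
            * ‖v (i + 1)‖ := rfl
        rw [hg]
        nlinarith [two_mul_le_add_sq (‖v i‖ * ‖r i‖)
          (‖l (i + 1)‖ * ‖v (i + 1)‖)]
      calc ∑ i : ZMod n, 2 * g i
          ≤ ∑ i : ZMod n, (‖r i‖ ^ 2 * ‖v i‖ ^ 2
              + ‖l (i + 1)‖ ^ 2 * ‖v (i + 1)‖ ^ 2) :=
            Finset.sum_le_sum fun i _ => h1 i
        _ = ∑ i : ZMod n, (‖r i‖ ^ 2 * ‖v i‖ ^ 2)
            + ∑ i : ZMod n, ‖l (i + 1)‖ ^ 2 * ‖v (i + 1)‖ ^ 2 :=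
            Finset.sum_add_distrib
        _ = ∑ i : ZMod n, (‖r i‖ ^ 2 * ‖v i‖ ^ 2)
            + ∑ i : ZMod n, ‖l i‖ ^ 2 * ‖v i‖ ^ 2 := by
            congr 1
            exact Fintype.sum_equiv (Equiv.addRight (1 : ZMod n)) _ _ (fun i => rfl)
        _ = ∑ i : ZMod n, (‖l i‖ ^ 2 + ‖r i‖ ^ 2)
              * ‖v i‖ ^ 2 := by
            rw [← Finset.sum_add_distrib]
            exact Finset.sum_congr rfl fun i _ => by ring
        _ = N := by
            rw [hNdef]
            exact Finset.sum_congr rfl fun i _ => by rw [hunit i, one_mul]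
    exact step1.trans (step2.trans step3)
  have habsμ : ‖μ‖ ≤ 1 := by
    rw [norm_mul, Complex.norm_real, Real.norm_eq_abs, abs_of_pos hNpos] at hbound
    nlinarith [hbound]
  refine ⟨him, ?_, ?_⟩ <;>
  · have := Complex.abs_re_le_norm μ
    have := abs_le.mp (this.trans habsμ)
    first | exact this.1 | exact this.2
end

section
/- Let J and J̃ be two n×n Hermitian matrices of the cyclic-tridiagonal form J_{i,i+1 mod n} = conj(r_i) l_{i+1} with |l_i|² + |r_i|² = 1, such that |l_i| = |l̃_i| and |r_i| = |r̃_i| for all i, and the products ∏_{i=0}^{n-1} conj(r_i) l_i and ∏_{i=0}^{n-1} conj(r̃_i) l̃_i have equal real parts. Then J and J̃ have the same characteristic polynomial, hence the same spectrum. -/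
open Matrix Polynomial

private lemma aux_charpoly_conj {N : Type*} [DecidableEq N] [Fintype N]
    (D E M : Matrix N N ℂ) (h : D * E = 1) :
    (D * M * E).charpoly = M.charpoly := by
  set f : ℂ →+* (ℂ[X]) := (C : ℂ →+* ℂ[X])
  have hmap : f.mapMatrix D * f.mapMatrix E = 1 := by
    rw [← _root_.map_mul, h, _root_.map_one]
  have hc : charmatrix (D * M * E) = f.mapMatrix D * charmatrix M * f.mapMatrix E := by
    rw [charmatrix, charmatrix, mul_sub, sub_mul]
    have hDME : (C.mapMatrix : Matrix N N ℂ →+* Matrix N N ℂ[X]) (D * M * E)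
        = f.mapMatrix D * C.mapMatrix M * f.mapMatrix E := by
      rw [_root_.map_mul, _root_.map_mul]
    rw [hDME]
    congr 1
    have hcomm : Matrix.scalar N (X : ℂ[X]) * f.mapMatrix E = f.mapMatrix E * Matrix.scalar N X :=
      (Matrix.scalar_commute (X : ℂ[X]) (fun r => Commute.all _ _) _).eq
    rw [mul_assoc, hcomm, ← mul_assoc, hmap, one_mul]
  rw [Matrix.charpoly, Matrix.charpoly, hc, det_mul, det_mul]
  have hde : (f.mapMatrix D).det * (f.mapMatrix E).det = 1 := by
    rw [← det_mul, hmap, det_one]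
  calc (f.mapMatrix D).det * (charmatrix M).det * (f.mapMatrix E).det
      = (charmatrix M).det * ((f.mapMatrix D).det * (f.mapMatrix E).det) := by ring
    _ = (charmatrix M).det := by rw [hde, mul_one]

private lemma aux_charpoly_transpose {N : Type*} [DecidableEq N] [Fintype N]
    (M : Matrix N N ℂ) : Mᵀ.charpoly = M.charpoly := by
  have h : charmatrix Mᵀ = (charmatrix M)ᵀ := by
    refine Matrix.ext fun i j => ?_
    by_cases hij : i = j
    · subst hij; simp [charmatrix_apply]
    · rw [charmatrix_apply_ne _ _ _ hij, Matrix.transpose_apply, Matrix.transpose_apply,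
        charmatrix_apply_ne _ _ _ (Ne.symm hij)]
  rw [Matrix.charpoly, Matrix.charpoly, h, det_transpose]

private lemma aux_eval_charpoly {N : Type*} [DecidableEq N] [Fintype N]
    (M : Matrix N N ℂ) (μ : ℂ) :
    M.charpoly.eval μ = (algebraMap ℂ (Matrix N N ℂ) μ - M).det := by
  have h1 : M.charpoly.eval μ = (evalRingHom μ) (charmatrix M).det := rfl
  rw [h1, RingHom.map_det]
  congr 1
  refine Matrix.ext fun i j => ?_
  by_cases hij : i = j
  · subst hij
    simp [charmatrix_apply_eq, Matrix.algebraMap_matrix_apply]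
  · simp [charmatrix_apply_ne _ _ _ hij, Matrix.algebraMap_matrix_apply, hij]

private lemma aux_spectrum_eq {N : Type*} [DecidableEq N] [Fintype N]
    {A B : Matrix N N ℂ} (h : A.charpoly = B.charpoly) :
    spectrum ℂ A = spectrum ℂ B := by
  ext μ
  rw [spectrum.mem_iff, spectrum.mem_iff, Matrix.isUnit_iff_isUnit_det,
    Matrix.isUnit_iff_isUnit_det, ← aux_eval_charpoly, ← aux_eval_charpoly, h]

private lemma aux_val_neg_one (n : ℕ) [NeZero n] : (-1 : ZMod n).val = n - 1 := by
  obtain ⟨m, rfl⟩ : ∃ m, n = m + 1 :=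
    ⟨n - 1, (Nat.succ_pred_eq_of_pos (Nat.pos_of_ne_zero (NeZero.ne n))).symm⟩
  simpa using ZMod.val_neg_one m

private lemma aux_prod_shift {n : ℕ} [NeZero n] (c : ZMod n) (g : ZMod n → ℂ) :
    ∏ t ∈ Finset.range n, g (c + (t : ZMod n)) = ∏ j : ZMod n, g j := by
  refine Finset.prod_nbij' (fun t => c + (t : ZMod n)) (fun j => (j - c).val)
    (fun t _ => Finset.mem_univ _) (fun j _ => Finset.mem_range.mpr (ZMod.val_lt _))
    (fun t ht => ?_) (fun j _ => ?_) (fun t _ => rfl)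
  · have ht' : t < n := Finset.mem_range.mp ht
    show ((c + (t : ZMod n)) - c).val = t
    rw [add_sub_cancel_left, ZMod.val_cast_of_lt ht']
  · show c + (((j - c).val : ℕ) : ZMod n) = j
    rw [ZMod.natCast_val, ZMod.cast_id, add_sub_cancel]

/-- Core lemma: two Hermitian cyclic-tridiagonal matrices with superdiagonals of equal
moduli and equal cyclic products are diagonally unitarily similar, hence have equal
characteristic polynomials. -/
private lemma aux_core (n : ℕ) [NeZero n] (hn : 2 ≤ n) (a b : ZMod n → ℂ)
    (A B : Matrix (ZMod n) (ZMod n) ℂ)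
    (hAh : A.IsHermitian) (hBh : B.IsHermitian)
    (hAs : ∀ i, A i (i + 1) = a i) (hBs : ∀ i, B i (i + 1) = b i)
    (hAz : ∀ i j : ZMod n, j ≠ i + 1 → i ≠ j + 1 → A i j = 0)
    (hBz : ∀ i j : ZMod n, j ≠ i + 1 → i ≠ j + 1 → B i j = 0)
    (habs : ∀ i, ‖a i‖ = ‖b i‖)
    (hprod : ∏ i, a i = ∏ i, b i) :
    A.charpoly = B.charpoly := by
  have h1n : (1 : ZMod n).val = 1 := ZMod.val_one'' (by omega)
  obtain ⟨k, hk⟩ : ∃ k : ZMod n, a k = 0 ∨ ∀ j, a j ≠ 0 := by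
    by_cases hex : ∃ k, a k = 0
    · obtain ⟨k, hk⟩ := hex; exact ⟨k, Or.inl hk⟩
    · exact ⟨0, Or.inr fun j hj => hex ⟨j, hj⟩⟩
  set w : ZMod n → ℂ :=
    fun j => if a j = 0 then 1 else (starRingEnd ℂ) (b j) * ((starRingEnd ℂ) (a j))⁻¹ with hw
  have habs0 : ∀ j, a j = 0 → b j = 0 := by
    intro j hj
    have := habs j
    rw [hj, norm_zero] at this
    exact norm_eq_zero.mp this.symm
  have habsw : ∀ j, ‖w j‖ = 1 := by
    intro j
    by_cases hj : a j = 0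
    · simp [hw, hj]
    · have hja : ‖a j‖ ≠ 0 := fun h => hj (norm_eq_zero.mp h)
      rw [hw]
      simp only [hj, if_false]
      rw [norm_mul, norm_inv, Complex.norm_conj, Complex.norm_conj, ← habs j]
      field_simp
  set f : ℕ → ℂ := fun m => ∏ t ∈ Finset.range m, w (k + 1 + (t : ZMod n)) with hf
  have hfsucc : ∀ m, f (m + 1) = f m * w (k + 1 + (m : ZMod n)) := by
    intro m; rw [hf]; exact Finset.prod_range_succ _ m
  have habsf : ∀ m, ‖f m‖ = 1 := by
    intro m
    rw [hf]
    simp only [norm_prod]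
    exact Finset.prod_eq_one fun t _ => habsw _
  set d : ZMod n → ℂ := fun i => f ((i - (k + 1)).val) with hd
  have habsd : ∀ i, ‖d i‖ = 1 := fun i => habsf _
  have hdd : ∀ i, d i * (starRingEnd ℂ) (d i) = 1 := by
    intro i
    rw [Complex.mul_conj, ← Complex.sq_norm, habsd i]
    norm_num
  have hdk1 : d (k + 1) = 1 := by
    rw [hd]
    simp [hf]
  have hstep : ∀ i, i ≠ k → d (i + 1) = d i * w i := by
    intro i hi
    set x : ZMod n := i - (k + 1) with hx
    have hx1 : x + 1 ≠ 0 := by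
      intro h
      apply hi
      have h2 : i - k = 0 := by rw [← h, hx]; ring
      exact sub_eq_zero.mp h2
    have hvlt : x.val + 1 < n := by
      rcases lt_or_eq_of_le (Nat.succ_le_of_lt (ZMod.val_lt x)) with h | h
      · exact h
      · exfalso
        apply hx1
        have h3 : (x + 1).val = 0 := by
          have h4 : x.val + 1 = n := h
          rw [ZMod.val_add, h1n, h4, Nat.mod_self]
        exact (ZMod.val_eq_zero _).mp h3
    have hval : (x + 1).val = x.val + 1 := by
      have h9 := ZMod.val_add_of_lt (a := x) (b := 1) (by rw [h1n]; omega)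
      rw [h1n] at h9
      exact h9
    have hix : i + 1 - (k + 1) = x + 1 := by rw [hx]; ring
    have hcast : ((x.val : ℕ) : ZMod n) = x := by rw [ZMod.natCast_val, ZMod.cast_id]
    have hkx : k + 1 + ((x.val : ℕ) : ZMod n) = i := by rw [hcast, hx]; ring
    calc d (i + 1) = f ((x + 1).val) := by rw [hd]; simp only [hix]
      _ = f (x.val + 1) := by rw [hval]
      _ = f x.val * w (k + 1 + (x.val : ZMod n)) := hfsucc _
      _ = d i * w i := by rw [hkx]
  -- the key edge relation
  have hedge : ∀ i, d i * (starRingEnd ℂ) (d (i + 1)) * a i = b i := by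
    intro i
    by_cases hik : i = k
    · rw [hik, hdk1, _root_.map_one, mul_one]
      rcases hk with hak | hall
      · rw [hak, habs0 _ hak, mul_zero]
      · -- all a j nonzero; use the product hypothesis
        have hbne : ∀ j, b j ≠ 0 := by
          intro j h
          apply hall j
          have h4 := habs j
          rw [h, norm_zero] at h4
          exact norm_eq_zero.mp h4
        have hfn : f n = 1 := by
          rw [hf]
          show ∏ t ∈ Finset.range n, w (k + 1 + (t : ZMod n)) = 1
          rw [aux_prod_shift (k + 1) w]
          have hwj : ∀ j : ZMod n, w j = (starRingEnd ℂ) (b j) * ((starRingEnd ℂ) (a j))⁻¹ := by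
            intro j; rw [hw]; simp [hall j]
          rw [Finset.prod_congr rfl fun j _ => hwj j, Finset.prod_mul_distrib,
            Finset.prod_inv_distrib, ← map_prod, ← map_prod, ← hprod]
          have hne : (starRingEnd ℂ) (∏ i, a i) ≠ 0 := by
            rw [starRingEnd_apply]
            exact star_ne_zero.mpr (Finset.prod_ne_zero_iff.mpr fun j _ => hall j)
          field_simp
        have hsplit : f n = f (n - 1) * w k := by
          have hnn : n = (n - 1) + 1 := by omega
          have hcast : (((n - 1 : ℕ)) : ZMod n) = -1 := by
            have h0 : ((n : ℕ) : ZMod n) = 0 := ZMod.natCast_self n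
            have h5 : (((n - 1 : ℕ)) : ZMod n) = ((n : ℕ) : ZMod n) - 1 := by
              rw [Nat.cast_sub (by omega)]
              norm_num
            rw [h5, h0]; ring
          have hkk : k + 1 + ((n - 1 : ℕ) : ZMod n) = k := by rw [hcast]; ring
          calc f n = f ((n - 1) + 1) := by rw [← hnn]
            _ = f (n - 1) * w (k + 1 + ((n - 1 : ℕ) : ZMod n)) := hfsucc _
            _ = f (n - 1) * w k := by rw [hkk]
        have hdk : d k = f (n - 1) := by
          rw [hd]
          have h6 : k - (k + 1) = -1 := by ring
          simp only [h6, aux_val_neg_one]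
        have hcb : (starRingEnd ℂ) (b k) ≠ 0 := by
          rw [starRingEnd_apply]; exact star_ne_zero.mpr (hbne k)
        have hca : (starRingEnd ℂ) (a k) ≠ 0 := by
          rw [starRingEnd_apply]; exact star_ne_zero.mpr (hall k)
        have h2 : f (n - 1) * (starRingEnd ℂ) (b k) = (starRingEnd ℂ) (a k) := by
          have h3 : f (n - 1) * w k = 1 := by rw [← hsplit, hfn]
          rw [hw] at h3
          simp only [hall k, if_false] at h3
          field_simp at h3
          linear_combination h3
        have habs2 : (starRingEnd ℂ) (a k) * a k = (starRingEnd ℂ) (b k) * b k := by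
          rw [mul_comm, Complex.mul_conj, mul_comm, Complex.mul_conj, ← Complex.sq_norm,
            ← Complex.sq_norm, habs k]
        apply mul_left_cancel₀ hcb
        rw [hdk]
        linear_combination a k * h2 + habs2
    · rw [hstep i hik, _root_.map_mul]
      by_cases hai : a i = 0
      · rw [hai, habs0 _ hai, mul_zero]
      · have hca : a i ≠ 0 := hai
        have hwi : (starRingEnd ℂ) (w i) = b i * (a i)⁻¹ := by
          rw [hw]
          simp only [hai, if_false]
          rw [_root_.map_mul, map_inv₀, Complex.conj_conj, Complex.conj_conj]
        rw [hwi]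
        have h1 := hdd i
        calc d i * ((starRingEnd ℂ) (d i) * (b i * (a i)⁻¹)) * a i
            = (d i * (starRingEnd ℂ) (d i)) * b i * ((a i)⁻¹ * a i) := by ring
          _ = b i := by rw [h1, inv_mul_cancel₀ hca, one_mul, mul_one]
  -- B is a diagonal conjugate of A
  set e : ZMod n → ℂ := fun i => (starRingEnd ℂ) (d i) with he
  have he' : ∀ t, e t = (starRingEnd ℂ) (d t) := fun t => rfl
  have hBd : B = Matrix.diagonal d * A * Matrix.diagonal e := by
    refine Matrix.ext fun i j => ?_
    rw [Matrix.mul_diagonal, Matrix.diagonal_mul]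
    by_cases hji : j = i + 1
    · subst hji
      rw [he' (i + 1), hBs i, hAs i, ← hedge i]; ring
    · by_cases hij : i = j + 1
      · subst hij
        rw [he' j, ← hBh.apply (j + 1) j, ← hAh.apply (j + 1) j, hBs j, hAs j, ← hedge j]
        simp only [starRingEnd_apply, star_mul', star_star]
        ring
      · rw [hBz i j hji hij, hAz i j hji hij]; ring
  have hDE : Matrix.diagonal d * Matrix.diagonal e = 1 := by
    rw [Matrix.diagonal_mul_diagonal]
    have h7 : (fun i => d i * e i) = fun _ => (1 : ℂ) := funext fun i => by
      rw [he' i]; exact hdd i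
    rw [h7, Matrix.diagonal_one]
  rw [hBd]
  exact (aux_charpoly_conj _ _ A hDE).symm

/-- Two Hermitian cyclic-tridiagonal Jacobi matrices built from unit vectors `(l_i, r_i)` and
`(l̃_i, r̃_i)` with `|l_i| = |l̃_i|`, `|r_i| = |r̃_i|` for all `i` and equal real parts of
`∏ conj(r_i) l_i` have the same characteristic polynomial, hence the same spectrum. -/
theorem stmt_11 (n : ℕ) [NeZero n] (hn : 2 ≤ n)
    (l r l' r' : ZMod n → ℂ)
    (hunit : ∀ i, ‖l i‖ ^ 2 + ‖r i‖ ^ 2 = 1)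
    (hunit' : ∀ i, ‖l' i‖ ^ 2 + ‖r' i‖ ^ 2 = 1)
    (J J' : Matrix (ZMod n) (ZMod n) ℂ)
    (hherm : J.IsHermitian) (hherm' : J'.IsHermitian)
    (hsuper : ∀ i j : ZMod n, j = i + 1 → J i j = (starRingEnd ℂ) (r i) * l j)
    (hsuper' : ∀ i j : ZMod n, j = i + 1 → J' i j = (starRingEnd ℂ) (r' i) * l' j)
    (hzero : ∀ i j : ZMod n, j ≠ i + 1 → i ≠ j + 1 → J i j = 0)
    (hzero' : ∀ i j : ZMod n, j ≠ i + 1 → i ≠ j + 1 → J' i j = 0)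
    (habsl : ∀ i, ‖l i‖ = ‖l' i‖)
    (habsr : ∀ i, ‖r i‖ = ‖r' i‖)
    (hre : (∏ i : ZMod n, (starRingEnd ℂ) (r i) * l i).re
            = (∏ i : ZMod n, (starRingEnd ℂ) (r' i) * l' i).re) :
    J.charpoly = J'.charpoly ∧ spectrum ℂ J = spectrum ℂ J' := by
  set a : ZMod n → ℂ := fun i => (starRingEnd ℂ) (r i) * l (i + 1) with ha
  set b : ZMod n → ℂ := fun i => (starRingEnd ℂ) (r' i) * l' (i + 1) with hb
  have hJa : ∀ i, J i (i + 1) = a i := fun i => hsuper i _ rfl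
  have hJb : ∀ i, J' i (i + 1) = b i := fun i => hsuper' i _ rfl
  have habs_ab : ∀ i, ‖a i‖ = ‖b i‖ := by
    intro i
    rw [ha, hb]
    simp only [norm_mul, Complex.norm_conj]
    rw [habsr, habsl]
  set P : ℂ := ∏ i : ZMod n, (starRingEnd ℂ) (r i) * l i with hP
  set P' : ℂ := ∏ i : ZMod n, (starRingEnd ℂ) (r' i) * l' i with hP'
  have hshift : ∀ g : ZMod n → ℂ, ∏ i : ZMod n, g (i + 1) = ∏ i : ZMod n, g i := by
    intro g
    exact Fintype.prod_equiv (Equiv.addRight 1) _ _ fun i => rfl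
  have hPa : ∏ i, a i = P := by
    rw [ha, hP, Finset.prod_mul_distrib, Finset.prod_mul_distrib, hshift l]
  have hPb : ∏ i, b i = P' := by
    rw [hb, hP', Finset.prod_mul_distrib, Finset.prod_mul_distrib, hshift l']
  have habsP : ‖P‖ = ‖P'‖ := by
    rw [hP, hP', norm_prod, norm_prod]
    refine Finset.prod_congr rfl fun i _ => ?_
    rw [norm_mul, norm_mul, Complex.norm_conj, Complex.norm_conj, habsr, habsl]
  have hcase : P' = P ∨ P' = (starRingEnd ℂ) P := by
    have h2 : Complex.normSq P = Complex.normSq P' := by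
      rw [← Complex.sq_norm, ← Complex.sq_norm, habsP]
    rw [Complex.normSq_apply, Complex.normSq_apply] at h2
    have hre2 : P.re * P.re = P'.re * P'.re := by rw [hre]
    have him : P'.im = P.im ∨ P'.im = -P.im := by
      have h3 : (P'.im - P.im) * (P'.im + P.im) = 0 := by linear_combination hre2 - h2
      rcases mul_eq_zero.mp h3 with h | h
      · left; linarith
      · right; linarith
    rcases him with h | h
    · left; exact Complex.ext hre.symm h
    · right
      refine Complex.ext ?_ ?_
      · rw [Complex.conj_re]; exact hre.symm
      · rw [Complex.conj_im]; exact h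
  have hcp : J.charpoly = J'.charpoly := by
    rcases hcase with h | h
    · exact aux_core n hn a b J J' hherm hherm' hJa hJb hzero hzero' habs_ab
        (by rw [hPa, hPb, h])
    · have hT : Jᵀ.charpoly = J'.charpoly := by
        refine aux_core n hn (fun i => (starRingEnd ℂ) (a i)) b Jᵀ J' hherm.transpose hherm'
          ?_ hJb ?_ hzero' ?_ ?_
        · intro i
          show Jᵀ i (i + 1) = (starRingEnd ℂ) (a i)
          have h8 := hherm.apply (i + 1) i
          rw [Matrix.transpose_apply, ← h8, hJa i, starRingEnd_apply]
        · intro i j hji hij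
          rw [Matrix.transpose_apply]
          exact hzero j i hij hji
        · intro i
          show ‖(starRingEnd ℂ) (a i)‖ = ‖b i‖
          rw [Complex.norm_conj]
          exact habs_ab i
        · rw [← map_prod, hPa, hPb, h]
      calc J.charpoly = Jᵀ.charpoly := (aux_charpoly_transpose J).symm
        _ = J'.charpoly := hT
  exact ⟨hcp, aux_spectrum_eq hcp⟩
end

section
/- Consider the quantum walk on the cycle C_n (n ≥ 2) with moving shift and coin operator 𝒞 = |0⟩⟨0| ⊗ C + ∑_{i=1}^{n-1} |i⟩⟨i| ⊗ I₂, where C is a 2×2 unitary matrix. Then for every positive integer k, (⟨0| ⊗ I₂) (U^{MS})^{kn} (|0⟩ ⊗ I₂) = C^k, where U^{MS} = S^{MS} 𝒞. -/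
/-- The moving shift on the cycle `C_n`: `S(|i⟩⊗|R⟩) = |i+1⟩⊗|R⟩`,
`S(|i⟩⊗|L⟩) = |i−1⟩⊗|L⟩`, with chirality `L = 0`, `R = 1`. -/
def movingShift (n : ℕ) [NeZero n] : Matrix (ZMod n × Fin 2) (ZMod n × Fin 2) ℂ :=
  fun p q =>
    if p.2 = q.2 ∧ ((q.2 = 1 ∧ p.1 = q.1 + 1) ∨ (q.2 = 0 ∧ p.1 = q.1 - 1)) then 1 else 0

/-- The coin operator `𝒞 = |0⟩⟨0| ⊗ C + ∑_{i≠0} |i⟩⟨i| ⊗ I₂`. -/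
def coinAtOrigin (n : ℕ) [NeZero n] (C : Matrix (Fin 2) (Fin 2) ℂ) :
    Matrix (ZMod n × Fin 2) (ZMod n × Fin 2) ℂ :=
  fun p q =>
    if p.1 = q.1 then (if p.1 = 0 then C p.2 q.2 else if p.2 = q.2 then 1 else 0) else 0

lemma S_mul {n : ℕ} [NeZero n] (M : Matrix (ZMod n × Fin 2) (ZMod n × Fin 2) ℂ)
    (i : ZMod n) (e : Fin 2) (q : ZMod n × Fin 2) :
    (movingShift n * M) (i, e) q =
      M (if e = 0 then i + 1 else i - 1, e) q := by
  rw [Matrix.mul_apply, Fintype.sum_prod_type]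
  fin_cases e <;>
    simp only [movingShift, Fin.sum_univ_two, ← sub_eq_iff_eq_add, eq_sub_iff_add_eq, Finset.sum_ite_eq,
      Finset.mem_univ, if_true, ite_mul, one_mul, zero_mul] <;> simp

lemma coin_mul {n : ℕ} [NeZero n] (C : Matrix (Fin 2) (Fin 2) ℂ)
    (M : Matrix (ZMod n × Fin 2) (ZMod n × Fin 2) ℂ)
    (a : ZMod n) (e : Fin 2) (q : ZMod n × Fin 2) :
    (coinAtOrigin n C * M) (a, e) q =
      if a = 0 then ∑ f : Fin 2, C e f * M (0, f) q else M (a, e) q := by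
  rw [Matrix.mul_apply, Fintype.sum_prod_type]
  by_cases ha : a = 0 <;>
    simp [coinAtOrigin, ha, Fin.sum_univ_two, eq_comm]

lemma step {n : ℕ} [NeZero n] (C : Matrix (Fin 2) (Fin 2) ℂ)
    (M : Matrix (ZMod n × Fin 2) (ZMod n × Fin 2) ℂ)
    (i : ZMod n) (e : Fin 2) (q : ZMod n × Fin 2) :
    (movingShift n * coinAtOrigin n C * M) (i, e) q =
      if (if e = 0 then i + 1 else i - 1) = 0 then ∑ f : Fin 2, C e f * M (0, f) q
      else M (if e = 0 then i + 1 else i - 1, e) q := by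
  rw [Matrix.mul_assoc, S_mul, coin_mul]

lemma cast_ne_zero' {n m : ℕ} [NeZero n] (h1 : 0 < m) (h2 : m < n) : (m : ZMod n) ≠ 0 := by
  rw [Ne, ZMod.natCast_eq_zero_iff]
  exact fun h => absurd (Nat.le_of_dvd h1 h) (not_le.2 h2)

lemma colm {n : ℕ} [NeZero n] (hn : 2 ≤ n) (C : Matrix (Fin 2) (Fin 2) ℂ) (d : Fin 2) :
    ∀ m : ℕ, 0 < m → m < n → ∀ (i : ZMod n) (e : Fin 2),
      ((movingShift n * coinAtOrigin n C) ^ m) (i, e) (0, d) =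
        if e = 1 ∧ i = (m : ZMod n) then C 1 d
        else if e = 0 ∧ i = -(m : ZMod n) then C 0 d else 0 := by
  intro m
  induction m with
  | zero => omega
  | succ m ih =>
    intro _ h2 i e
    rcases Nat.eq_zero_or_pos m with hm | hm
    · subst hm
      rw [pow_one, ← Matrix.mul_one (movingShift n * coinAtOrigin n C), step]
      have h1 : ((1 : ℕ) : ZMod n) = 1 := by push_cast; ring
      fin_cases e
      · simp only [Matrix.one_apply, Prod.ext_iff, Fin.sum_univ_two, h1, Fin.isValue,
          Fin.zero_eta, if_true, show ((⟨0, by norm_num⟩ : Fin 2) = 0) from rfl,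
          add_eq_zero_iff_eq_neg]
        by_cases hi : i = -1 <;> simp [hi, add_eq_zero_iff_eq_neg] <;> fin_cases d <;> simp
      · simp only [Matrix.one_apply, Prod.ext_iff, Fin.sum_univ_two, h1, Fin.isValue,
          Fin.mk_one, show ((⟨1, by norm_num⟩ : Fin 2) = 0) ↔ False by simp, if_false,
          sub_eq_zero]
        by_cases hi : i = 1 <;> simp [hi, sub_eq_zero] <;> fin_cases d <;> simp
    · have hmn : ((m : ℕ) : ZMod n) ≠ 0 := cast_ne_zero' hm (by omega)
      have hmn' : ((0:ZMod n) : ZMod n) ≠ ((m : ℕ) : ZMod n) := Ne.symm hmn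
      have hmnn : (0 : ZMod n) ≠ -((m : ℕ) : ZMod n) := by
        simp only [ne_eq, eq_comm, neg_eq_zero]; exact hmn
      have hc : ((m + 1 : ℕ) : ZMod n) = ((m : ℕ) : ZMod n) + 1 := by push_cast; ring
      rw [pow_succ', step]
      simp only [ih hm (by omega), hc]
      by_cases he : e = 0
      · subst he
        simp only [show ((0:Fin 2) = 0) ↔ True by simp, show ((0:Fin 2) = 1) ↔ False by simp,
          if_true, true_and, false_and, if_false]
        by_cases hi : i + 1 = 0
        · rw [if_pos hi]
          have hi' : i = -1 := eq_neg_of_add_eq_zero_left hi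
          have hne : i ≠ -(((m : ℕ) : ZMod n) + 1) := by
            rw [hi']
            intro h
            apply hmn
            have := neg_injective h
            linear_combination this.symm
          simp [Fin.sum_univ_two, hmn', hmnn]
          exact fun h => (hmn (by rw [hi'] at h; linear_combination h)).elim
        · rw [if_neg hi]
          have hmm : -(((m : ℕ) : ZMod n) + 1) = -((m : ℕ) : ZMod n) - 1 := by ring
          have hcond : (i + 1 = -((m : ℕ) : ZMod n)) ↔ (i = -((m : ℕ) : ZMod n) - 1) := by
            rw [eq_sub_iff_add_eq]
          simp [hcond, hmm]
      · have he1 : e = 1 := by omega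
        subst he1
        simp only [show ((1:Fin 2) = 0) ↔ False by simp, show ((1:Fin 2) = 1) ↔ True by simp,
          if_true, true_and, false_and, if_false]
        by_cases hi : i - 1 = 0
        · rw [if_pos hi]
          have hi' : i = 1 := by rwa [sub_eq_zero] at hi
          have hne : i ≠ ((m : ℕ) : ZMod n) + 1 := by
            rw [hi']
            intro h
            apply hmn
            linear_combination -h
          simp [Fin.sum_univ_two, hmn', hmnn, hne]
        · rw [if_neg hi]
          have hcond : (i - 1 = ((m : ℕ) : ZMod n)) ↔ (i = ((m : ℕ) : ZMod n) + 1) := by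
            rw [sub_eq_iff_eq_add]
          simp [hcond]

lemma coln {n : ℕ} [NeZero n] (hn : 2 ≤ n) (C : Matrix (Fin 2) (Fin 2) ℂ)
    (i : ZMod n) (e d : Fin 2) :
    ((movingShift n * coinAtOrigin n C) ^ n) (i, e) (0, d) =
      if i = 0 then C e d else 0 := by
  have h10 : (1 : ZMod n) ≠ 0 := by
    have := cast_ne_zero' (n := n) (m := 1) one_pos (by omega)
    simpa using this
  have hcast : ((n - 1 : ℕ) : ZMod n) = -1 := by
    rw [Nat.cast_sub (by omega), ZMod.natCast_self]
    push_cast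
    ring
  have hn1 : n - 1 + 1 = n := by omega
  rw [show (movingShift n * coinAtOrigin n C) ^ n
      = (movingShift n * coinAtOrigin n C) ^ (n - 1 + 1) by rw [hn1], pow_succ', step]
  simp only [colm hn C d (n - 1) (by omega) (by omega), hcast]
  have hA : (0 : ZMod n) ≠ -1 := fun h => h10 (by linear_combination h)
  have hB : (0 : ZMod n) ≠ -(-1 : ZMod n) := by
    simpa using Ne.symm h10
  by_cases he : e = 0
  · subst he
    simp only [show ((0:Fin 2) = 0) ↔ True by simp, show ((0:Fin 2) = 1) ↔ False by simp,
      if_true, true_and, false_and, if_false]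
    by_cases hi : i + 1 = 0
    · rw [if_pos hi]
      have hi' : i = -1 := eq_neg_of_add_eq_zero_left hi
      have hne : i ≠ 0 := by rw [hi']; exact Ne.symm hA
      simp [Fin.sum_univ_two, hA, hB, hne, Ne.symm h10]
    · rw [if_neg hi]
      have hcond : (i + 1 = -(-1 : ZMod n)) ↔ (i = 0) := by
        rw [neg_neg]
        exact ⟨fun h => by linear_combination h, fun h => by rw [h]; ring⟩
      simp [hcond]
  · have he1 : e = 1 := by omega
    subst he1
    simp only [show ((1:Fin 2) = 0) ↔ False by simp, show ((1:Fin 2) = 1) ↔ True by simp,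
      if_true, true_and, false_and, if_false]
    by_cases hi : i - 1 = 0
    · rw [if_pos hi]
      have hi' : i = 1 := by rwa [sub_eq_zero] at hi
      have hne : i ≠ 0 := by rw [hi']; exact h10
      simp [Fin.sum_univ_two, hA, hB, hne, Ne.symm h10]
    · rw [if_neg hi]
      have hcond : (i - 1 = (-1 : ZMod n)) ↔ (i = 0) := by
        rw [sub_eq_iff_eq_add]
        constructor <;> intro h <;> [skip; rw [h]] <;> [linear_combination h; ring]
      simp [hcond]

lemma colkn {n : ℕ} [NeZero n] (hn : 2 ≤ n) (C : Matrix (Fin 2) (Fin 2) ℂ) (d : Fin 2)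
    (k : ℕ) : ∀ (i : ZMod n) (e : Fin 2),
    ((movingShift n * coinAtOrigin n C) ^ (k * n)) (i, e) (0, d) =
      if i = 0 then (C ^ k) e d else 0 := by
  induction k with
  | zero =>
    intro i e
    simp only [Nat.zero_mul, pow_zero, Matrix.one_apply, Prod.ext_iff]
    by_cases hi : i = 0 <;> by_cases hd : e = d <;> simp [hi, hd, Matrix.one_apply]
  | succ k ih =>
    intro i e
    rw [show (k + 1) * n = n + k * n by ring, pow_add, Matrix.mul_apply,
      Fintype.sum_prod_type, Finset.sum_comm]
    simp only [ih, mul_ite, mul_zero]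
    rw [Fin.sum_univ_two]
    simp only [Finset.sum_ite_eq', Finset.mem_univ, if_true, coln hn]
    by_cases hi : i = 0
    · simp [hi, pow_succ', Matrix.mul_apply, Fin.sum_univ_two]
    · simp [hi]

/-- For the `[C:1, I₂:n−1]` quantum walk on `C_n` with moving shift, the `2×2` block of
`(U^{MS})^{kn}` at position `(0,0)` equals `C^k`. -/
theorem stmt_14 (n : ℕ) [NeZero n] (hn : 2 ≤ n)
    (C : Matrix (Fin 2) (Fin 2) ℂ) (hC : C ∈ Matrix.unitaryGroup (Fin 2) ℂ)
    (k : ℕ) (hk : 0 < k) :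
    ∀ c d : Fin 2,
      ((movingShift n * coinAtOrigin n C) ^ (k * n)) ((0 : ZMod n), c) ((0 : ZMod n), d)
        = (C ^ k) c d := by
  intro c d
  rw [colkn hn C d k 0 c]
  simp
end

section
/- For the [C:1, I₂:n−1] quantum walk on the cycle C_n with moving shift, where C ∈ U(2) has eigenvalues exp(2πi L₁/M₁) and exp(2πi L₂/M₂) in lowest terms and C is not diagonal in the chirality basis, the period of U^{MS} is exactly M·n, where M = lcm(M₁, M₂). In particular, (U^{MS})^{Mn} = I and no smaller positive power of U^{MS} equals the identity. -/
open Polynomial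

namespace Stmt16
set_option linter.unusedSectionVars false

variable {n : ℕ} [NeZero n]

def kap (p : ZMod n × Fin 2) : ZMod n := if p.2 = 1 then -p.1 else p.1

def bcoin (n : ℕ) [NeZero n] (A : Matrix (Fin 2) (Fin 2) ℂ) :
    Matrix (ZMod n × Fin 2) (ZMod n × Fin 2) ℂ :=
  fun p q => if kap p = kap q then A p.2 q.2 else 0

def Fm (n : ℕ) [NeZero n] (C : Matrix (Fin 2) (Fin 2) ℂ) (m : ℕ) :
    Matrix (ZMod n × Fin 2) (ZMod n × Fin 2) ℂ :=
  fun p q => if kap p = kap q then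
      (if (kap p).val < m then C p.2 q.2 else if p = q then 1 else 0) else 0

def back (m : ℕ) (p : ZMod n × Fin 2) : ZMod n × Fin 2 :=
  (if p.2 = 1 then p.1 - m else p.1 + m, p.2)

lemma fin2 (c : Fin 2) : c = 0 ∨ c = 1 := by omega

lemma shift_mul (M : Matrix (ZMod n × Fin 2) (ZMod n × Fin 2) ℂ) (p q : ZMod n × Fin 2) :
    (movingShift n * M) p q = M (back 1 p) q := by
  rw [Matrix.mul_apply]
  rw [Finset.sum_eq_single (back 1 p)]
  · rcases fin2 p.2 with h | h <;>
      simp [movingShift, back, h, sub_add_cancel, sub_eq_iff_eq_add]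
  · intro r _ hr
    apply mul_eq_zero_of_left
    simp only [movingShift, ite_eq_right_iff]
    rintro ⟨h1, ⟨h2, h3⟩ | ⟨h2, h3⟩⟩ <;>
    · exfalso
      apply hr
      rw [Prod.ext_iff]
      constructor
      · simp [back, h1, h2, h3]
      · simp [back, h1]
  · intro h; exact absurd (Finset.mem_univ _) h

lemma coin_mul (C : Matrix (Fin 2) (Fin 2) ℂ)
    (M : Matrix (ZMod n × Fin 2) (ZMod n × Fin 2) ℂ) (p q : ZMod n × Fin 2) :
    (coinAtOrigin n C * M) p q =
      if p.1 = 0 then C p.2 0 * M (0, 0) q + C p.2 1 * M (0, 1) q else M p q := by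
  by_cases h0 : p.1 = 0
  · rw [Matrix.mul_apply, Fintype.sum_prod_type]
    simp only [h0, if_pos]
    rw [Finset.sum_eq_single (0 : ZMod n)]
    · simp [coinAtOrigin, h0, Fin.sum_univ_two]
    · intro i _ hi
      simp [coinAtOrigin, h0, hi, Ne.symm hi]
    · intro h; exact absurd (Finset.mem_univ _) h
  · simp only [h0, if_false]
    rw [Matrix.mul_apply, Finset.sum_eq_single p]
    · simp [coinAtOrigin, h0]
    · intro r _ hr
      apply mul_eq_zero_of_left
      simp only [coinAtOrigin, h0, ite_eq_right_iff]
      intro h1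
      rw [if_neg (by simp : ¬False), ite_eq_right_iff]
      intro h2
      exact absurd (Prod.ext h1.symm h2.symm) hr
    · intro h; exact absurd (Finset.mem_univ _) h


lemma kap_mk0 (i : ZMod n) : kap (i, (0 : Fin 2)) = i := by simp [kap]

lemma kap_mk1 (i : ZMod n) : kap (i, (1 : Fin 2)) = -i := if_pos rfl

lemma back_mk0 (m : ℕ) (i : ZMod n) : back m (i, (0 : Fin 2)) = (i + m, 0) := by
  simp [back]

lemma back_mk1 (m : ℕ) (i : ZMod n) : back m (i, (1 : Fin 2)) = (i - m, 1) := by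
  simp [back]

lemma split0 (p : ZMod n × Fin 2) (h : p.2 = 0) : p = (p.1, 0) := Prod.ext rfl h

lemma split1 (p : ZMod n × Fin 2) (h : p.2 = 1) : p = (p.1, 1) := Prod.ext rfl h

lemma eq_of_kap_eq {p q : ZMod n × Fin 2} (h : kap p = kap q) (h2 : p.2 = q.2) : p = q := by
  rcases fin2 p.2 with hc | hc
  · rw [split0 p hc, split0 q (hc ▸ h2.symm : q.2 = 0)] at h ⊢
    rw [kap_mk0, kap_mk0] at h
    rw [h]
  · rw [split1 p hc, split1 q (hc ▸ h2.symm : q.2 = 1)] at h ⊢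
    rw [kap_mk1, kap_mk1] at h
    rw [neg_injective h]

lemma cast_val (a : ZMod n) : ((a.val : ℕ) : ZMod n) = a := by
  rw [ZMod.natCast_val, ZMod.cast_id]

lemma Fm_succ_eq (C : Matrix (Fin 2) (Fin 2) ℂ) (m : ℕ) (x q : ZMod n × Fin 2)
    (h : kap x ≠ (m : ZMod n)) : Fm n C m x q = Fm n C (m + 1) x q := by
  have hv : (kap x).val ≠ m := by
    intro hv
    exact h (by rw [← hv, cast_val])
  unfold Fm
  exact if_congr Iff.rfl
    (if_congr ⟨fun h' => by omega, fun h' => by omega⟩ rfl rfl) rfl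

def Gm (n : ℕ) [NeZero n] (C : Matrix (Fin 2) (Fin 2) ℂ) (m : ℕ) :
    Matrix (ZMod n × Fin 2) (ZMod n × Fin 2) ℂ :=
  fun p q => Fm n C m (back m p) q

lemma pow_succ_le (C : Matrix (Fin 2) (Fin 2) ℂ) (m : ℕ) (hm : m + 1 ≤ n) :
    movingShift n * coinAtOrigin n C * Gm n C m = Gm n C (m + 1) := by
  have hmn : m < n := hm
  have valm : ((m : ZMod n)).val = m := ZMod.val_cast_of_lt hmn
  have hcast : ((m + 1 : ℕ) : ZMod n) = (m : ZMod n) + 1 := by push_cast; ring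
  ext p q
  rw [Matrix.mul_assoc, shift_mul, coin_mul]
  -- values of Gm C m at the pair-m states
  have g0 : Gm n C m ((0 : ZMod n), (0 : Fin 2)) q
      = if (m : ZMod n) = kap q then (if ((m : ZMod n), (0 : Fin 2)) = q then 1 else 0) else 0 := by
    rw [Gm, back_mk0, Fm, kap_mk0, zero_add, valm]
    rw [if_neg (lt_irrefl m)]
  have g1 : Gm n C m ((0 : ZMod n), (1 : Fin 2)) q
      = if (m : ZMod n) = kap q then (if (-(m : ZMod n), (1 : Fin 2)) = q then 1 else 0) else 0 := by
    rw [Gm, back_mk1, Fm, kap_mk1, zero_sub, neg_neg, valm]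
    rw [if_neg (lt_irrefl m)]
  -- the coined-pair value
  have key : ∀ c : Fin 2,
      C c 0 * Gm n C m ((0 : ZMod n), (0 : Fin 2)) q + C c 1 * Gm n C m ((0 : ZMod n), (1 : Fin 2)) q
      = if (m : ZMod n) = kap q then C c q.2 else 0 := by
    intro c
    rw [g0, g1]
    by_cases hq : (m : ZMod n) = kap q
    · rw [if_pos hq, if_pos hq, if_pos hq]
      rcases fin2 q.2 with hq2 | hq2
      · have hqe : q = ((m : ZMod n), (0 : Fin 2)) := by
          refine Prod.ext ?_ hq2
          have hk : kap q = q.1 := by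
            have hq' : q = (q.1, (0 : Fin 2)) := Prod.ext rfl hq2
            rw [hq', kap_mk0]
          rw [hk] at hq
          exact hq.symm
        have hne : ((-(m : ZMod n), (1 : Fin 2)) : ZMod n × Fin 2) ≠ q := by
          rw [hqe]
          intro hcon
          have h2 : (1 : Fin 2) = 0 := congrArg Prod.snd hcon
          exact absurd h2 (by decide)
        rw [if_pos hqe.symm, if_neg hne, hq2]
        ring
      · have hqe : q = (-(m : ZMod n), (1 : Fin 2)) := by
          refine Prod.ext ?_ hq2
          have hk : kap q = -q.1 := by
            have hq' : q = (q.1, (1 : Fin 2)) := Prod.ext rfl hq2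
            rw [hq', kap_mk1]
          rw [hk] at hq
          exact (by linear_combination hq : q.1 = -(m : ZMod n))
        have hne : (((m : ZMod n), (0 : Fin 2)) : ZMod n × Fin 2) ≠ q := by
          rw [hqe]
          intro hcon
          have h2 : (0 : Fin 2) = 1 := congrArg Prod.snd hcon
          exact absurd h2 (by decide)
        rw [if_neg hne, if_pos hqe.symm, hq2]
        ring
    · rw [if_neg hq, if_neg hq, if_neg hq]
      ring
  rcases fin2 p.2 with hp2 | hp2
  · -- p.2 = 0
    have hp : p = (p.1, (0 : Fin 2)) := Prod.ext rfl hp2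
    rw [hp]
    rw [show back 1 (p.1, (0 : Fin 2)) = (p.1 + 1, (0 : Fin 2)) by rw [back_mk0, Nat.cast_one]]
    by_cases hb : p.1 + 1 = 0
    · rw [if_pos hb]
      have hx : back (m + 1) (p.1, (0 : Fin 2)) = ((m : ZMod n), (0 : Fin 2)) := by
        rw [back_mk0, hcast]
        have hp1 : p.1 = -1 := eq_neg_of_add_eq_zero_left hb
        rw [hp1]; ring_nf
      have hrhs : Gm n C (m + 1) (p.1, (0 : Fin 2)) q
          = if (m : ZMod n) = kap q then C 0 q.2 else 0 := by
        rw [Gm, hx, Fm, kap_mk0, valm, if_pos (Nat.lt_succ_self m)]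
      rw [hrhs]
      exact key 0
    · rw [if_neg hb]
      have hxx : back m (p.1 + 1, (0 : Fin 2)) = back (m + 1) (p.1, (0 : Fin 2)) := by
        rw [back_mk0, back_mk0, hcast]
        congr 1
        ring
      rw [Gm, Gm, hxx]
      apply Fm_succ_eq
      rw [back_mk0, kap_mk0, hcast]
      intro hcon
      exact hb (by linear_combination hcon)
  · -- p.2 = 1
    have hp : p = (p.1, (1 : Fin 2)) := Prod.ext rfl hp2
    rw [hp]
    rw [show back 1 (p.1, (1 : Fin 2)) = (p.1 - 1, (1 : Fin 2)) by rw [back_mk1, Nat.cast_one]]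
    by_cases hb : p.1 - 1 = 0
    · rw [if_pos hb]
      have hx : back (m + 1) (p.1, (1 : Fin 2)) = (-(m : ZMod n), (1 : Fin 2)) := by
        rw [back_mk1, hcast]
        have hp1 : p.1 = 1 := by rwa [sub_eq_zero] at hb
        rw [hp1]; ring_nf
      have hrhs : Gm n C (m + 1) (p.1, (1 : Fin 2)) q
          = if (m : ZMod n) = kap q then C 1 q.2 else 0 := by
        rw [Gm, hx, Fm, kap_mk1, neg_neg, valm, if_pos (Nat.lt_succ_self m)]
      rw [hrhs]
      exact key 1
    · rw [if_neg hb]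
      have hxx : back m (p.1 - 1, (1 : Fin 2)) = back (m + 1) (p.1, (1 : Fin 2)) := by
        rw [back_mk1, back_mk1, hcast]
        congr 1
        ring
      rw [Gm, Gm, hxx]
      apply Fm_succ_eq
      rw [back_mk1, kap_mk1, hcast]
      intro hcon
      exact hb (by linear_combination -hcon)


lemma pow_eq (C : Matrix (Fin 2) (Fin 2) ℂ) {m : ℕ} (hm : m ≤ n) :
    (movingShift n * coinAtOrigin n C) ^ m = Gm n C m := by
  induction m with
  | zero =>
    ext p q
    rw [pow_zero]
    have hb : back 0 p = p := by
      rcases fin2 p.2 with h | h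
      · rw [split0 p h]; simp [back_mk0]
      · rw [split1 p h]; simp [back_mk1]
    rw [Gm, hb, Fm]
    by_cases hpq : p = q
    · subst hpq; simp [Matrix.one_apply]
    · simp [hpq, Matrix.one_apply]
  | succ m ih =>
    have hm' : m ≤ n := Nat.le_of_succ_le hm
    rw [pow_succ', ih hm']
    exact pow_succ_le C m hm

lemma U_pow_n (C : Matrix (Fin 2) (Fin 2) ℂ) :
    (movingShift n * coinAtOrigin n C) ^ n = bcoin n C := by
  rw [pow_eq C le_rfl]
  ext p q
  have hb : back n p = p := by
    rcases fin2 p.2 with h | h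
    · rw [split0 p h]; simp [back_mk0, ZMod.natCast_self]
    · rw [split1 p h]; simp [back_mk1, ZMod.natCast_self]
  rw [Gm, hb, Fm, bcoin]
  by_cases h : kap p = kap q
  · rw [if_pos h, if_pos h, if_pos (ZMod.val_lt (kap p))]
  · rw [if_neg h, if_neg h]

lemma bcoin_mul (A B : Matrix (Fin 2) (Fin 2) ℂ) :
    bcoin n A * bcoin n B = bcoin n (A * B) := by
  ext p q
  rw [Matrix.mul_apply, Fintype.sum_prod_type]
  simp only [Fin.sum_univ_two]
  have h0 : ∀ i : ZMod n, bcoin n A p (i, 0) * bcoin n B (i, 0) q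
      = if kap p = i then A p.2 0 * (if kap p = kap q then B 0 q.2 else 0) else 0 := by
    intro i
    show (if kap p = kap (i, 0) then A p.2 0 else 0) *
        (if kap (i, 0) = kap q then B 0 q.2 else 0) = _
    rw [kap_mk0]
    by_cases h : kap p = i
    · rw [if_pos h, if_pos h, ← h]
    · rw [if_neg h, if_neg h, zero_mul]
  have h1 : ∀ i : ZMod n, bcoin n A p (i, 1) * bcoin n B (i, 1) q
      = if -kap p = i then A p.2 1 * (if kap p = kap q then B 1 q.2 else 0) else 0 := by
    intro i
    show (if kap p = kap (i, 1) then A p.2 1 else 0) *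
        (if kap (i, 1) = kap q then B 1 q.2 else 0) = _
    rw [kap_mk1]
    by_cases h : -kap p = i
    · have h' : kap p = -i := by rw [← h, neg_neg]
      rw [if_pos h, if_pos h', h'.symm]
    · have h' : ¬ kap p = -i := fun hc => h (by rw [hc, neg_neg])
      rw [if_neg h', if_neg h, zero_mul]
  simp only [h0, h1]
  rw [Finset.sum_add_distrib, Finset.sum_ite_eq, Finset.sum_ite_eq]
  simp only [Finset.mem_univ, if_pos]
  by_cases h : kap p = kap q
  · simp [bcoin, h, Matrix.mul_apply, Fin.sum_univ_two]
  · simp [bcoin, h]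

lemma bcoin_one : bcoin n (1 : Matrix (Fin 2) (Fin 2) ℂ) = 1 := by
  ext p q
  by_cases hpq : p = q
  · subst hpq; simp [bcoin, Matrix.one_apply]
  · rw [Matrix.one_apply_ne hpq, bcoin]
    by_cases h : kap p = kap q
    · rw [if_pos h, Matrix.one_apply_ne (fun hc => hpq (eq_of_kap_eq h hc))]
    · rw [if_neg h]

lemma bcoin_pow (A : Matrix (Fin 2) (Fin 2) ℂ) (k : ℕ) :
    (bcoin n A) ^ k = bcoin n (A ^ k) := by
  induction k with
  | zero => rw [pow_zero, pow_zero, bcoin_one]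
  | succ k ih => rw [pow_succ, pow_succ, ih, bcoin_mul]

lemma bcoin_injective (A B : Matrix (Fin 2) (Fin 2) ℂ) (h : bcoin n A = bcoin n B) :
    A = B := by
  ext a b
  have h' : bcoin n A ((0 : ZMod n), a) ((0 : ZMod n), b)
      = bcoin n B ((0 : ZMod n), a) ((0 : ZMod n), b) := by rw [h]
  have hk : ∀ c : Fin 2, kap ((0 : ZMod n), c) = 0 := by
    intro c
    rcases fin2 c with hc | hc <;> subst hc
    · rw [kap_mk0]
    · rw [kap_mk1, neg_zero]
  rw [bcoin, bcoin, hk a, hk b, if_pos rfl, if_pos rfl] at h'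
  exact h'


lemma exp_pow_eq_one_iff (L : ℤ) (M : ℕ) (hM : 0 < M) (hcop : Int.gcd L (M : ℤ) = 1)
    (s : ℕ) :
    (Complex.exp (2 * Real.pi * Complex.I * L / M)) ^ s = 1 ↔ M ∣ s := by
  have hM0 : (M : ℂ) ≠ 0 := Nat.cast_ne_zero.mpr hM.ne'
  have hpi : (2 * (Real.pi : ℂ) * Complex.I) ≠ 0 := by
    simp [Real.pi_ne_zero, Complex.I_ne_zero, Complex.ofReal_ne_zero]
  rw [← Complex.exp_nat_mul, Complex.exp_eq_one_iff]
  constructor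
  · rintro ⟨k, hk⟩
    have h2 : ((s : ℂ) * L) * (2 * (Real.pi : ℂ) * Complex.I)
        = ((k : ℂ) * M) * (2 * (Real.pi : ℂ) * Complex.I) := by
      field_simp at hk
      linear_combination (2 * (Real.pi : ℂ) * Complex.I) * hk
    have hc' := mul_right_cancel₀ hpi h2
    have hz : (s : ℤ) * L = k * M := by exact_mod_cast hc'
    have hdvd : (M : ℤ) ∣ L * (s : ℤ) := ⟨k, by linarith [hz, mul_comm L (s : ℤ)]⟩
    have hcop' : Int.gcd L (M : ℤ) = 1 := hcop
    have : (M : ℤ) ∣ (s : ℤ) :=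
      Int.dvd_of_dvd_mul_right_of_gcd_one hdvd (by rwa [Int.gcd_comm])
    exact_mod_cast this
  · rintro ⟨c, rfl⟩
    refine ⟨L * c, ?_⟩
    push_cast
    field_simp

lemma conj_mul_self_exp (L : ℤ) (M : ℕ) (hM : 0 < M) :
    Complex.exp (2 * Real.pi * Complex.I * L / M) *
      (starRingEnd ℂ) (Complex.exp (2 * Real.pi * Complex.I * L / M)) = 1 := by
  rw [← Complex.exp_conj]
  have hconj : (starRingEnd ℂ) (2 * Real.pi * Complex.I * L / M)
      = -(2 * Real.pi * Complex.I * L / M) := by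
    simp [map_div₀, map_mul, Complex.conj_I, Complex.conj_ofReal, map_ofNat]
    ring
  rw [hconj, ← Complex.exp_add, add_neg_cancel, Complex.exp_zero]

end Stmt16

open Stmt16

/-- For the `[C:1, I₂:n−1]` quantum walk on `C_n` with moving shift, where `C ∈ U(2)` has
eigenvalues `exp(2πi L₁/M₁)`, `exp(2πi L₂/M₂)` in lowest terms and `C` is not diagonal in
the chirality basis, the period of `U^{MS}` is exactly `M·n` with `M = lcm(M₁, M₂)`. -/
theorem stmt_16 (n : ℕ) [NeZero n] (hn : 2 ≤ n)
    (C : Matrix (Fin 2) (Fin 2) ℂ) (hC : C ∈ Matrix.unitaryGroup (Fin 2) ℂ)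
    (L₁ L₂ : ℤ) (M₁ M₂ : ℕ) (hM₁ : 0 < M₁) (hM₂ : 0 < M₂)
    (hcop₁ : Int.gcd L₁ (M₁ : ℤ) = 1) (hcop₂ : Int.gcd L₂ (M₂ : ℤ) = 1)
    (lam₁ lam₂ : ℂ)
    (hlam₁ : lam₁ = Complex.exp (2 * Real.pi * Complex.I * L₁ / M₁))
    (hlam₂ : lam₂ = Complex.exp (2 * Real.pi * Complex.I * L₂ / M₂))
    (hspec : C.charpoly = (X - Polynomial.C lam₁) * (X - Polynomial.C lam₂))
    (hnondiag : ¬ (C 0 1 = 0 ∧ C 1 0 = 0)) :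
    (movingShift n * coinAtOrigin n C) ^ (Nat.lcm M₁ M₂ * n) = 1 ∧
      ∀ t : ℕ, 0 < t → t < Nat.lcm M₁ M₂ * n →
        (movingShift n * coinAtOrigin n C) ^ t ≠ 1 := by
  have hMpos : 0 < Nat.lcm M₁ M₂ := Nat.lcm_pos hM₁ hM₂
  have hnpos : 0 < n := Nat.pos_of_ne_zero (NeZero.ne n)
  have hcard : Fintype.card (Fin 2) = 2 := by simp
  have hexp : (X - Polynomial.C lam₁) * (X - Polynomial.C lam₂)
      = X ^ 2 - Polynomial.C (lam₁ + lam₂) * X + Polynomial.C (lam₁ * lam₂) := by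
    simp only [map_add, map_mul]; ring
  have htr2 : C 0 0 + C 1 1 = lam₁ + lam₂ := by
    have h1 : C.trace = -(C.charpoly.coeff (Fintype.card (Fin 2) - 1)) := by
      rw [Matrix.trace_eq_neg_charpoly_coeff]
    rw [hspec, hexp, hcard] at h1
    have hc : (X ^ 2 - Polynomial.C (lam₁ + lam₂) * X
        + Polynomial.C (lam₁ * lam₂) : Polynomial ℂ).coeff 1 = -(lam₁ + lam₂) := by
      simp [Polynomial.coeff_X_pow]
    rw [Matrix.trace_fin_two] at h1
    rw [show (2 - 1 : ℕ) = 1 from rfl] at h1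
    rw [hc, neg_neg] at h1
    exact h1
  have hdet2 : C 0 0 * C 1 1 - C 0 1 * C 1 0 = lam₁ * lam₂ := by
    have h1 := Matrix.det_eq_sign_charpoly_coeff C
    rw [hspec, hexp, hcard] at h1
    have hc : (X ^ 2 - Polynomial.C (lam₁ + lam₂) * X
        + Polynomial.C (lam₁ * lam₂) : Polynomial ℂ).coeff 0 = lam₁ * lam₂ := by
      simp [Polynomial.coeff_X_pow]
    rw [Matrix.det_fin_two] at h1
    rw [hc] at h1
    simpa using h1
  have hmod1 : lam₁ * (starRingEnd ℂ) lam₁ = 1 := by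
    rw [hlam₁]; exact conj_mul_self_exp L₁ M₁ hM₁
  have hu : star C * C = 1 := hC.1
  have h00 : (starRingEnd ℂ) (C 0 0) * C 0 0 + (starRingEnd ℂ) (C 1 0) * C 1 0 = 1 := by
    have hij := Matrix.ext_iff.mpr hu 0 0
    simpa [Matrix.mul_apply, Fin.sum_univ_two, Matrix.star_apply, Matrix.one_apply,
      Complex.star_def] using hij
  have h11 : (starRingEnd ℂ) (C 0 1) * C 0 1 + (starRingEnd ℂ) (C 1 1) * C 1 1 = 1 := by
    have hij := Matrix.ext_iff.mpr hu 1 1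
    simpa [Matrix.mul_apply, Fin.sum_univ_two, Matrix.star_apply, Matrix.one_apply,
      Complex.star_def] using hij
  have hne : lam₁ ≠ lam₂ := by
    intro heq
    rw [← heq] at htr2
    have hconj2 := congrArg (starRingEnd ℂ) htr2
    simp only [map_add] at hconj2
    have hkey : (C 0 0 - lam₁) * (starRingEnd ℂ) (C 0 0 - lam₁)
        + C 0 1 * (starRingEnd ℂ) (C 0 1) + C 1 0 * (starRingEnd ℂ) (C 1 0)
        + (C 1 1 - lam₁) * (starRingEnd ℂ) (C 1 1 - lam₁) = 0 := by
      simp only [map_sub]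
      linear_combination h00 + h11 - (starRingEnd ℂ) lam₁ * htr2 - lam₁ * hconj2 - 2 * hmod1
    rw [Complex.mul_conj, Complex.mul_conj, Complex.mul_conj, Complex.mul_conj] at hkey
    have hr : (Complex.normSq (C 0 0 - lam₁) + Complex.normSq (C 0 1)
        + Complex.normSq (C 1 0) + Complex.normSq (C 1 1 - lam₁) : ℝ) = 0 := by
      exact_mod_cast hkey
    have hb : C 0 1 = 0 := by
      apply Complex.normSq_eq_zero.mp
      linarith [Complex.normSq_nonneg (C 0 0 - lam₁), Complex.normSq_nonneg (C 1 0),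
        Complex.normSq_nonneg (C 0 1), Complex.normSq_nonneg (C 1 1 - lam₁)]
    have hcc : C 1 0 = 0 := by
      apply Complex.normSq_eq_zero.mp
      linarith [Complex.normSq_nonneg (C 0 0 - lam₁), Complex.normSq_nonneg (C 0 1),
        Complex.normSq_nonneg (C 1 0), Complex.normSq_nonneg (C 1 1 - lam₁)]
    exact hnondiag ⟨hb, hcc⟩
  have hCH : (C - lam₁ • 1) * (C - lam₂ • 1) = 0 := by
    ext i j
    simp only [Matrix.mul_apply, Fin.sum_univ_two, Matrix.sub_apply, Matrix.smul_apply,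
      Matrix.one_apply, smul_eq_mul, Matrix.zero_apply]
    rcases fin2 i with hi | hi <;> subst hi <;> rcases fin2 j with hj | hj <;> subst hj <;>
      simp only [if_pos rfl, show ((0 : Fin 2) = 1) = False by simp, show ((1 : Fin 2) = 0) = False by simp,
        if_true, if_false, mul_one, mul_zero, sub_zero]
    · linear_combination (C 0 0) * htr2 - hdet2
    · linear_combination (C 0 1) * htr2
    · linear_combination (C 1 0) * htr2
    · linear_combination (C 1 1) * htr2 - hdet2
  have hCH' : (C - lam₂ • 1) * (C - lam₁ • 1) = 0 := by
    ext i j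
    simp only [Matrix.mul_apply, Fin.sum_univ_two, Matrix.sub_apply, Matrix.smul_apply,
      Matrix.one_apply, smul_eq_mul, Matrix.zero_apply]
    rcases fin2 i with hi | hi <;> subst hi <;> rcases fin2 j with hj | hj <;> subst hj <;>
      simp only [if_pos rfl, show ((0 : Fin 2) = 1) = False by simp, show ((1 : Fin 2) = 0) = False by simp,
        if_true, if_false, mul_one, mul_zero, sub_zero]
    · linear_combination (C 0 0) * htr2 - hdet2
    · linear_combination (C 0 1) * htr2
    · linear_combination (C 1 0) * htr2
    · linear_combination (C 1 1) * htr2 - hdet2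
  have mulkey : ∀ (Y : Matrix (Fin 2) (Fin 2) ℂ) (nu : ℂ), C * Y = nu • Y →
      ∀ k : ℕ, C ^ k * Y = nu ^ k • Y := by
    intro Y nu h k
    induction k with
    | zero => simp
    | succ k ih =>
      calc C ^ (k + 1) * Y = C ^ k * (C * Y) := by rw [pow_succ, Matrix.mul_assoc]
      _ = nu • (C ^ k * Y) := by rw [h, Matrix.mul_smul]
      _ = nu ^ (k + 1) • Y := by rw [ih, smul_smul, ← pow_succ']
  have e1 : C * (C - lam₂ • 1) = lam₁ • (C - lam₂ • 1) := by
    have h := hCH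
    rwa [sub_mul, Matrix.smul_mul, Matrix.one_mul, sub_eq_zero] at h
  have e2 : C * (C - lam₁ • 1) = lam₂ • (C - lam₁ • 1) := by
    have h := hCH'
    rwa [sub_mul, Matrix.smul_mul, Matrix.one_mul, sub_eq_zero] at h
  have hlam₁M : lam₁ ^ Nat.lcm M₁ M₂ = 1 := by
    rw [hlam₁]
    exact (exp_pow_eq_one_iff L₁ M₁ hM₁ hcop₁ _).mpr (Nat.dvd_lcm_left _ _)
  have hlam₂M : lam₂ ^ Nat.lcm M₁ M₂ = 1 := by
    rw [hlam₂]
    exact (exp_pow_eq_one_iff L₂ M₂ hM₂ hcop₂ _).mpr (Nat.dvd_lcm_right _ _)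
  have hCM : C ^ Nat.lcm M₁ M₂ = 1 := by
    have h1 := mulkey _ lam₁ e1 (Nat.lcm M₁ M₂); rw [hlam₁M, one_smul] at h1
    have h2 := mulkey _ lam₂ e2 (Nat.lcm M₁ M₂); rw [hlam₂M, one_smul] at h2
    have hsub : (C - lam₂ • 1) - (C - lam₁ • 1) = (lam₁ - lam₂) • (1 : Matrix (Fin 2) (Fin 2) ℂ) := by
      rw [sub_smul]; abel
    have h3 : C ^ Nat.lcm M₁ M₂ * ((lam₁ - lam₂) • (1 : Matrix (Fin 2) (Fin 2) ℂ))
        = (lam₁ - lam₂) • 1 := by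
      calc C ^ Nat.lcm M₁ M₂ * ((lam₁ - lam₂) • (1 : Matrix (Fin 2) (Fin 2) ℂ))
          = C ^ Nat.lcm M₁ M₂ * ((C - lam₂ • 1) - (C - lam₁ • 1)) := by rw [hsub]
      _ = C ^ Nat.lcm M₁ M₂ * (C - lam₂ • 1) - C ^ Nat.lcm M₁ M₂ * (C - lam₁ • 1) := by
          rw [mul_sub]
      _ = (C - lam₂ • 1) - (C - lam₁ • 1) := by rw [h1, h2]
      _ = (lam₁ - lam₂) • 1 := hsub
    rw [mul_smul_comm, mul_one] at h3
    exact smul_right_injective (Matrix (Fin 2) (Fin 2) ℂ) (sub_ne_zero.mpr hne) h3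
  have eig : ∀ (mu : ℂ), (C - mu • 1).det = 0 → ∀ s : ℕ, C ^ s = 1 → mu ^ s = 1 := by
    intro mu hdetz s hCs
    obtain ⟨v, hv0, hv⟩ := Matrix.exists_mulVec_eq_zero_iff.mpr hdetz
    have hCv : C.mulVec v = mu • v := by
      rwa [Matrix.sub_mulVec, Matrix.smul_mulVec, Matrix.one_mulVec, sub_eq_zero] at hv
    have hpow : ∀ k : ℕ, (C ^ k).mulVec v = mu ^ k • v := by
      intro k
      induction k with
      | zero => simp [Matrix.one_mulVec]
      | succ k ih =>
        rw [pow_succ, ← Matrix.mulVec_mulVec, hCv, Matrix.mulVec_smul, ih, smul_smul, ← pow_succ']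
    have h := hpow s
    rw [hCs, Matrix.one_mulVec] at h
    obtain ⟨i, hvi⟩ := Function.ne_iff.mp hv0
    have hvi' : v i = mu ^ s * v i := by
      conv_lhs => rw [h]
      simp
    have h2 : (mu ^ s - 1) * v i = 0 := by linear_combination -hvi'
    rcases mul_eq_zero.mp h2 with h3 | h3
    · exact sub_eq_zero.mp h3
    · exact absurd h3 hvi
  have hdz1 : (C - lam₁ • 1).det = 0 := by
    rw [Matrix.det_fin_two]
    simp only [Matrix.sub_apply, Matrix.smul_apply, Matrix.one_apply, smul_eq_mul]
    simp only [show ((0 : Fin 2) = 1) = False by simp, show ((1 : Fin 2) = 0) = False by simp,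
      if_true, if_false, mul_one, mul_zero, sub_zero, if_pos rfl]
    linear_combination hdet2 - lam₁ * htr2
  have hdz2 : (C - lam₂ • 1).det = 0 := by
    rw [Matrix.det_fin_two]
    simp only [Matrix.sub_apply, Matrix.smul_apply, Matrix.one_apply, smul_eq_mul]
    simp only [show ((0 : Fin 2) = 1) = False by simp, show ((1 : Fin 2) = 0) = False by simp,
      if_true, if_false, mul_one, mul_zero, sub_zero, if_pos rfl]
    linear_combination hdet2 - lam₂ * htr2
  have hUn : (movingShift n * coinAtOrigin n C) ^ n = bcoin n C := U_pow_n C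
  constructor
  · rw [show Nat.lcm M₁ M₂ * n = n * Nat.lcm M₁ M₂ from mul_comm _ _, pow_mul, hUn,
      bcoin_pow, hCM, bcoin_one]
  · intro t ht htlt hUt
    have htd : n * (t / n) + t % n = t := Nat.div_add_mod t n
    have hrn : t % n < n := Nat.mod_lt t hnpos
    have hsplit : (movingShift n * coinAtOrigin n C) ^ t
        = bcoin n (C ^ (t / n)) * (movingShift n * coinAtOrigin n C) ^ (t % n) := by
      conv_lhs => rw [← htd, pow_add, pow_mul, hUn]
      rw [bcoin_pow]
    have hUr : (movingShift n * coinAtOrigin n C) ^ (t % n)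
        = bcoin n (C ^ ((Nat.lcm M₁ M₂ - 1) * (t / n))) := by
      have h1 : bcoin n (C ^ ((Nat.lcm M₁ M₂ - 1) * (t / n)))
          * (bcoin n (C ^ (t / n)) * (movingShift n * coinAtOrigin n C) ^ (t % n))
          = (movingShift n * coinAtOrigin n C) ^ (t % n) := by
        rw [← Matrix.mul_assoc, bcoin_mul, ← pow_add]
        have harith : (Nat.lcm M₁ M₂ - 1) * (t / n) + t / n = Nat.lcm M₁ M₂ * (t / n) := by
          calc (Nat.lcm M₁ M₂ - 1) * (t / n) + t / n
              = ((Nat.lcm M₁ M₂ - 1) + 1) * (t / n) := by ring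
          _ = Nat.lcm M₁ M₂ * (t / n) := by rw [Nat.sub_add_cancel hMpos]
        rw [harith, pow_mul, hCM, one_pow, bcoin_one, Matrix.one_mul]
      rw [← hsplit, hUt, Matrix.mul_one] at h1
      exact h1.symm
    have hr0 : t % n = 0 := by
      by_contra hrne
      have hrpos : 0 < t % n := Nat.pos_of_ne_zero hrne
      have hform := pow_eq (n := n) C (le_of_lt hrn)
      have hlhs : ((movingShift n * coinAtOrigin n C) ^ (t % n))
          ((0 : ZMod n), (1 : Fin 2)) (-(((t % n) : ℕ) : ZMod n), (1 : Fin 2)) = 1 := by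
        rw [hform]
        have hbp : back (t % n) ((0 : ZMod n), (1 : Fin 2))
            = (-(((t % n) : ℕ) : ZMod n), (1 : Fin 2)) := by
          rw [back_mk1, zero_sub]
        rw [Gm, hbp, Fm, kap_mk1, neg_neg]
        rw [ZMod.val_cast_of_lt hrn, if_neg (lt_irrefl (t % n)), if_pos rfl, if_pos rfl]
      have hrhs : (bcoin n (C ^ ((Nat.lcm M₁ M₂ - 1) * (t / n))))
          ((0 : ZMod n), (1 : Fin 2)) (-(((t % n) : ℕ) : ZMod n), (1 : Fin 2)) = 0 := by
        rw [bcoin, if_neg]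
        rw [kap_mk1, kap_mk1, neg_zero, neg_neg]
        intro hcon
        have : ((t % n : ℕ) : ZMod n) = 0 := hcon.symm
        rw [ZMod.natCast_eq_zero_iff] at this
        exact absurd (Nat.le_of_dvd hrpos this) (not_le.mpr hrn)
      rw [hUr, hrhs] at hlhs
      exact one_ne_zero hlhs.symm
    rw [hr0, add_zero] at htd
    rw [hr0, pow_zero, Matrix.mul_one] at hsplit
    rw [hUt] at hsplit
    have hCj : C ^ (t / n) = 1 := by
      apply bcoin_injective (n := n)
      rw [← hsplit, bcoin_one]
    have hjpos : 0 < t / n := by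
      rcases Nat.eq_zero_or_pos (t / n) with h | h
      · rw [h, mul_zero] at htd; omega
      · exact h
    have hl1 : lam₁ ^ (t / n) = 1 := eig lam₁ hdz1 _ hCj
    have hl2 : lam₂ ^ (t / n) = 1 := eig lam₂ hdz2 _ hCj
    rw [hlam₁] at hl1
    rw [hlam₂] at hl2
    have hd1 : M₁ ∣ t / n := (exp_pow_eq_one_iff L₁ M₁ hM₁ hcop₁ _).mp hl1
    have hd2 : M₂ ∣ t / n := (exp_pow_eq_one_iff L₂ M₂ hM₂ hcop₂ _).mp hl2
    have hd : Nat.lcm M₁ M₂ ∣ t / n := Nat.lcm_dvd hd1 hd2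
    have hle : Nat.lcm M₁ M₂ ≤ t / n := Nat.le_of_dvd hjpos hd
    have : Nat.lcm M₁ M₂ * n ≤ t := by
      calc Nat.lcm M₁ M₂ * n ≤ (t / n) * n := Nat.mul_le_mul_right n hle
      _ = n * (t / n) := mul_comm _ _
      _ = t := htd
    exact absurd htlt (not_lt.mpr this)
end
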